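/- Let ω be a radial weight in the class D̂ (i.e. ω̂(r) ≤ C ω̂((1+r)/2) for all 0 ≤ r < 1). Then there exist positive constants c₁, c₂ such that c₁ ω̂(1 - 1/x) ≤ ∫_0^1 s^x ω(s) ds ≤ c₂ ω̂(1 - 1/x) for all x ∈ [1, ∞). -/

import Mathlib

open MeasureTheory Set

section Stmt3Aux

lemma stmt3_Wnonneg {ω : ℝ → ℝ} (hω_nonneg : ∀ r ∈ Set.Ico (0:ℝ) 1, 0 ≤ ω r)
    {a b : ℝ} (ha : 0 ≤ a) (hb : b ≤ 1) :
    0 ≤ ∫ s in Set.Ioo a b, ω s :=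
  setIntegral_nonneg measurableSet_Ioo fun s hs =>
    hω_nonneg s ⟨le_trans ha hs.1.le, lt_of_lt_of_le hs.2 hb⟩

lemma stmt3_Wmono {ω : ℝ → ℝ} (hω_nonneg : ∀ r ∈ Set.Ico (0:ℝ) 1, 0 ≤ ω r)
    (hω_int : IntegrableOn ω (Set.Ioo (0:ℝ) 1))
    {a b : ℝ} (ha : 0 ≤ a) (hab : a ≤ b) :
    (∫ s in Set.Ioo b 1, ω s) ≤ ∫ s in Set.Ioo a 1, ω s := by
  apply setIntegral_mono_set (hω_int.mono_set (Set.Ioo_subset_Ioo ha le_rfl))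
  · filter_upwards [ae_restrict_mem measurableSet_Ioo] with s hs
    exact hω_nonneg s ⟨le_trans ha hs.1.le, hs.2⟩
  · exact HasSubset.Subset.eventuallyLE (Set.Ioo_subset_Ioo hab le_rfl)

lemma stmt3_doub {ω : ℝ → ℝ} (hω_nonneg : ∀ r ∈ Set.Ico (0:ℝ) 1, 0 ≤ ω r)
    {C : ℝ}
    (hdoubling : ∀ r ∈ Set.Ico (0:ℝ) 1,
      (∫ s in Set.Ioo r 1, ω s) ≤ C * ∫ s in Set.Ioo ((1 + r)/2) 1, ω s)
    {t : ℝ} (ht0 : 0 < t) (ht1 : t ≤ 1) :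
    (∫ s in Set.Ioo (1 - t) 1, ω s) ≤ (max C 1) * ∫ s in Set.Ioo (1 - t/2) 1, ω s := by
  have h := hdoubling (1 - t) ⟨by linarith, by linarith⟩
  have he : (1 + (1 - t))/2 = 1 - t/2 := by ring
  rw [he] at h
  refine h.trans (mul_le_mul_of_nonneg_right (le_max_left _ _) ?_)
  exact stmt3_Wnonneg hω_nonneg (by linarith) le_rfl

lemma stmt3_iter {ω : ℝ → ℝ} (hω_nonneg : ∀ r ∈ Set.Ico (0:ℝ) 1, 0 ≤ ω r)
    (hω_int : IntegrableOn ω (Set.Ioo (0:ℝ) 1)) {C : ℝ}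
    (hdoubling : ∀ r ∈ Set.Ico (0:ℝ) 1,
      (∫ s in Set.Ioo r 1, ω s) ≤ C * ∫ s in Set.Ioo ((1 + r)/2) 1, ω s)
    (n : ℕ) {t : ℝ} (ht0 : 0 < t) (ht1 : t ≤ 1) :
    (∫ s in Set.Ioo (max (1 - 2^n * t) 0) 1, ω s) ≤
      (max C 1)^n * ∫ s in Set.Ioo (1 - t) 1, ω s := by
  have hC1 : (1:ℝ) ≤ max C 1 := le_max_right _ _
  induction n with
  | zero =>
    rw [pow_zero, pow_zero, one_mul, one_mul, max_eq_left (by linarith)]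
  | succ n ih =>
    set u : ℝ := 2^n * t with hu
    have hu0 : 0 < u := by positivity
    have h2 : (2:ℝ)^(n+1) * t = 2 * u := by rw [hu]; ring
    rcases le_or_gt (2*u) 1 with h | h
    · have hmax1 : max (1 - 2^(n+1) * t) 0 = 1 - 2*u := by
        rw [h2, max_eq_left (by linarith)]
      have hmax2 : max (1 - u) 0 = 1 - u := max_eq_left (by linarith)
      rw [hmax1]
      have hd := stmt3_doub hω_nonneg hdoubling (t := 2*u) (by linarith) h
      have he : 1 - 2*u/2 = 1 - u := by ring
      rw [he] at hd
      rw [hmax2] at ih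
      calc (∫ s in Set.Ioo (1 - 2*u) 1, ω s)
          ≤ (max C 1) * ∫ s in Set.Ioo (1 - u) 1, ω s := hd
        _ ≤ (max C 1) * ((max C 1)^n * ∫ s in Set.Ioo (1 - t) 1, ω s) :=
            mul_le_mul_of_nonneg_left ih (by linarith)
        _ = (max C 1)^(n+1) * ∫ s in Set.Ioo (1 - t) 1, ω s := by ring
    · have hmax1 : max (1 - 2^(n+1) * t) 0 = 0 := by
        rw [h2, max_eq_right (by linarith)]
      rw [hmax1]
      have hd := stmt3_doub hω_nonneg hdoubling (t := 1) one_pos le_rfl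
      have he1 : (1:ℝ) - 1 = 0 := by norm_num
      have he2 : (1:ℝ) - 1/2 = 1/2 := by norm_num
      rw [he1, he2] at hd
      have hmono : (∫ s in Set.Ioo (1/2 : ℝ) 1, ω s)
          ≤ ∫ s in Set.Ioo (max (1 - u) 0) 1, ω s := by
        apply stmt3_Wmono hω_nonneg hω_int (le_max_right _ _)
        rcases le_total (1 - u) 0 with h' | h'
        · rw [max_eq_right h']; norm_num
        · rw [max_eq_left h']; linarith
      calc (∫ s in Set.Ioo (0:ℝ) 1, ω s)
          ≤ (max C 1) * ∫ s in Set.Ioo (1/2 : ℝ) 1, ω s := hd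
        _ ≤ (max C 1) * ∫ s in Set.Ioo (max (1 - u) 0) 1, ω s :=
            mul_le_mul_of_nonneg_left hmono (by linarith)
        _ ≤ (max C 1) * ((max C 1)^n * ∫ s in Set.Ioo (1 - t) 1, ω s) :=
            mul_le_mul_of_nonneg_left ih (by linarith)
        _ = (max C 1)^(n+1) * ∫ s in Set.Ioo (1 - t) 1, ω s := by ring

lemma stmt3_split {f : ℝ → ℝ} (hf : IntegrableOn f (Set.Ioo (0:ℝ) 1)) {a b c : ℝ}
    (ha : 0 ≤ a) (hab : a ≤ b) (hbc : b ≤ c) (hc : c ≤ 1) :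
    ∫ s in Set.Ioo a c, f s = (∫ s in Set.Ioo a b, f s) + ∫ s in Set.Ioo b c, f s := by
  have h1 : IntervalIntegrable f volume a b :=
    (intervalIntegrable_iff_integrableOn_Ioo_of_le hab).2
      (hf.mono_set (Set.Ioo_subset_Ioo ha (hbc.trans hc)))
  have h2 : IntervalIntegrable f volume b c :=
    (intervalIntegrable_iff_integrableOn_Ioo_of_le hbc).2
      (hf.mono_set (Set.Ioo_subset_Ioo (ha.trans hab) hc))
  have h := intervalIntegral.integral_add_adjacent_intervals h1 h2
  rw [intervalIntegral.integral_of_le hab, intervalIntegral.integral_of_le hbc,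
      intervalIntegral.integral_of_le (hab.trans hbc), integral_Ioc_eq_integral_Ioo,
      integral_Ioc_eq_integral_Ioo, integral_Ioc_eq_integral_Ioo] at h
  linarith

lemma stmt3_intg {ω : ℝ → ℝ} (hω_int : IntegrableOn ω (Set.Ioo (0:ℝ) 1))
    {x : ℝ} (hx : 0 ≤ x) :
    IntegrableOn (fun s => s ^ x * ω s) (Set.Ioo (0:ℝ) 1) := by
  apply Integrable.mono hω_int
  · exact ((Real.continuous_rpow_const hx).measurable.aestronglyMeasurable).mul hω_int.1
  · filter_upwards [ae_restrict_mem measurableSet_Ioo] with s hs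
    rw [norm_mul]
    have h1 : 0 ≤ s ^ x := Real.rpow_nonneg hs.1.le x
    have h2 : s ^ x ≤ 1 := Real.rpow_le_one hs.1.le hs.2.le hx
    calc ‖s ^ x‖ * ‖ω s‖ ≤ 1 * ‖ω s‖ := by
          refine mul_le_mul_of_nonneg_right ?_ (norm_nonneg _)
          rw [Real.norm_of_nonneg h1]; exact h2
      _ = ‖ω s‖ := one_mul _

lemma stmt3_summable {C' : ℝ} (hC' : 1 ≤ C') :
    Summable (fun k : ℕ => C' ^ (k+1) * Real.exp (-2^k)) := by
  have hC'0 : 0 < C' := lt_of_lt_of_le one_pos hC'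
  apply summable_of_ratio_norm_eventually_le (r := 1/2) (by norm_num)
  obtain ⟨m, hm⟩ := exists_nat_ge (Real.log (2 * C'))
  rw [Filter.eventually_atTop]
  refine ⟨m, fun k hk => ?_⟩
  have h2k : Real.log (2 * C') ≤ 2^k := by
    calc Real.log (2 * C') ≤ m := hm
      _ ≤ (k:ℝ) := by exact_mod_cast hk
      _ ≤ 2^k := by exact_mod_cast (Nat.lt_two_pow_self (n := k)).le
  have hexp : Real.exp (-2^k) ≤ 1 / (2 * C') := by
    rw [Real.exp_neg, one_div]
    apply inv_anti₀ (by positivity)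
    calc (2 * C') = Real.exp (Real.log (2 * C')) := (Real.exp_log (by positivity)).symm
      _ ≤ Real.exp (2^k) := Real.exp_le_exp.2 h2k
  have hpos : (0:ℝ) < C' ^ (k+1) * Real.exp (-2^k) := by positivity
  rw [Real.norm_of_nonneg (by positivity), Real.norm_of_nonneg (by positivity)]
  have key : C' ^ (k+1+1) * Real.exp (-2^(k+1))
      = (C' * Real.exp (-2^k)) * (C' ^ (k+1) * Real.exp (-2^k)) := by
    have h2 : -(2:ℝ)^(k+1) = -2^k + -2^k := by ring
    rw [h2, Real.exp_add]
    ring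
  rw [key]
  refine mul_le_mul_of_nonneg_right ?_ hpos.le
  calc C' * Real.exp (-2^k) ≤ C' * (1 / (2 * C')) :=
        mul_le_mul_of_nonneg_left hexp hC'0.le
    _ = 1/2 := by
        rw [mul_one_div, mul_comm 2 C', ← div_div, div_self hC'0.ne']

end Stmt3Aux

/-- For `ω ∈ D̂`, `∫_0^1 s^x ω(s) ds ≍ ω̂(1 - 1/x)` uniformly for `x ∈ [1,∞)`. -/
theorem stmt_3 (ω : ℝ → ℝ)
    (hω_nonneg : ∀ r ∈ Set.Ico (0:ℝ) 1, 0 ≤ ω r)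
    (hω_int : IntegrableOn ω (Set.Ioo (0:ℝ) 1))
    (C : ℝ) (hC : 0 < C)
    (hdoubling : ∀ r ∈ Set.Ico (0:ℝ) 1,
      (∫ s in Set.Ioo r 1, ω s) ≤ C * ∫ s in Set.Ioo ((1 + r)/2) 1, ω s) :
    ∃ c₁ > (0:ℝ), ∃ c₂ > (0:ℝ), ∀ x : ℝ, 1 ≤ x →
      c₁ * (∫ s in Set.Ioo (1 - 1/x) 1, ω s) ≤ (∫ s in Set.Ioo (0:ℝ) 1, s ^ x * ω s) ∧
      (∫ s in Set.Ioo (0:ℝ) 1, s ^ x * ω s) ≤ c₂ * ∫ s in Set.Ioo (1 - 1/x) 1, ω s := by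
  set C' := max C 1 with hC'def
  have hC'1 : (1:ℝ) ≤ C' := le_max_right _ _
  have hC'0 : (0:ℝ) < C' := lt_of_lt_of_le one_pos hC'1
  have hsum := stmt3_summable hC'1
  set K := ∑' k : ℕ, C' ^ (k+1) * Real.exp (-2^k) with hKdef
  have hK0 : 0 ≤ K := tsum_nonneg (fun k => by positivity)
  refine ⟨Real.exp (-1) / C', by positivity, 1 + K, by linarith, ?_⟩
  intro x hx
  have hx0 : (0:ℝ) < x := lt_of_lt_of_le one_pos hx
  have hix0 : (0:ℝ) < 1/x := by positivity
  have hix1 : 1/x ≤ 1 := by rw [div_le_one hx0]; exact hx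
  set W := ∫ s in Set.Ioo (1 - 1/x) 1, ω s with hWdef
  have hW0 : 0 ≤ W := stmt3_Wnonneg hω_nonneg (by linarith) le_rfl
  have hgint := stmt3_intg hω_int (x := x) hx0.le
  have hgnonneg : ∀ s ∈ Set.Ioo (0:ℝ) 1, 0 ≤ s ^ x * ω s := fun s hs =>
    mul_nonneg (Real.rpow_nonneg hs.1.le x) (hω_nonneg s ⟨hs.1.le, hs.2⟩)
  constructor
  · -- lower bound
    set a : ℝ := 1 - 1/(2*x) with hadef
    have hax : 1/(2*x) ≤ 1/2 := by
      rw [div_le_div_iff₀ (by positivity) (by norm_num)]; linarith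
    have ha2 : (1:ℝ)/2 ≤ a := by rw [hadef]; linarith
    have ha0 : (0:ℝ) ≤ a := le_trans (by norm_num) ha2
    have ha1 : a ≤ 1 := by
      rw [hadef]
      have h' : (0:ℝ) < 1/(2*x) := by positivity
      linarith
    have hWa : W ≤ C' * ∫ s in Set.Ioo a 1, ω s := by
      have hd := stmt3_doub hω_nonneg hdoubling (t := 1/x) hix0 hix1
      have he : 1 - (1/x)/2 = a := by rw [hadef]; ring
      rw [he] at hd
      exact hd
    have hIa0 : 0 ≤ ∫ s in Set.Ioo a 1, ω s := stmt3_Wnonneg hω_nonneg ha0 le_rfl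
    have hmono : (∫ s in Set.Ioo a 1, Real.exp (-1) * ω s)
        ≤ ∫ s in Set.Ioo a 1, s ^ x * ω s := by
      apply setIntegral_mono_on
        ((hω_int.mono_set (Set.Ioo_subset_Ioo ha0 le_rfl)).const_mul _)
        (hgint.mono_set (Set.Ioo_subset_Ioo ha0 le_rfl)) measurableSet_Ioo
      intro s hs
      have hs0 : 0 < s := lt_of_le_of_lt (by linarith : (0:ℝ) ≤ a) hs.1
      have hωs : 0 ≤ ω s := hω_nonneg s ⟨hs0.le, hs.2⟩
      refine mul_le_mul_of_nonneg_right ?_ hωs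
      -- exp (-1) ≤ s ^ x
      have hinv : s⁻¹ ≤ 1 + 1/x := by
        rw [← one_div, div_le_iff₀ hs0]
        have hy0 : 0 < 1/x := hix0
        have hy1 : 1/x ≤ 1 := hix1
        have hsa : 1 - (1/x)/2 < s := by
          have h' := hs.1
          rw [hadef] at h'
          have h'' : 1/(2*x) = (1/x)/2 := by ring
          linarith
        nlinarith [mul_nonneg hy0.le (sub_nonneg.2 hy1),
          mul_pos (show (0:ℝ) < 1 + 1/x by linarith) (sub_pos.2 hsa)]
      have hlog : -(1/x) ≤ Real.log s := by
        have h1 := Real.one_sub_inv_le_log_of_pos hs0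
        linarith
      have hxy : x * (1/x) = 1 := by field_simp
      have hxl : -1 ≤ Real.log s * x := by
        have := mul_le_mul_of_nonneg_left hlog hx0.le
        calc (-1 : ℝ) = x * (-(1/x)) := by rw [mul_neg, hxy]
          _ ≤ x * Real.log s := this
          _ = Real.log s * x := mul_comm _ _
      rw [Real.rpow_def_of_pos hs0]
      exact Real.exp_le_exp.2 hxl
    have hsub : (∫ s in Set.Ioo a 1, s ^ x * ω s)
        ≤ ∫ s in Set.Ioo (0:ℝ) 1, s ^ x * ω s := by
      apply setIntegral_mono_set hgint
      · filter_upwards [ae_restrict_mem measurableSet_Ioo] with s hs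
        exact hgnonneg s hs
      · exact HasSubset.Subset.eventuallyLE (Set.Ioo_subset_Ioo ha0 le_rfl)
    calc Real.exp (-1) / C' * W
        ≤ Real.exp (-1) / C' * (C' * ∫ s in Set.Ioo a 1, ω s) :=
          mul_le_mul_of_nonneg_left hWa (by positivity)
      _ = Real.exp (-1) * ∫ s in Set.Ioo a 1, ω s := by
          field_simp
      _ = ∫ s in Set.Ioo a 1, Real.exp (-1) * ω s := (integral_const_mul _ _).symm
      _ ≤ ∫ s in Set.Ioo a 1, s ^ x * ω s := hmono
      _ ≤ ∫ s in Set.Ioo (0:ℝ) 1, s ^ x * ω s := hsub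
  · -- upper bound
    have key : ∀ n : ℕ, (∫ s in Set.Ioo (0:ℝ) 1, s ^ x * ω s) ≤
        (1 + ∑ k ∈ Finset.range n, C'^(k+1) * Real.exp (-2^k)) * W
        + ∫ s in Set.Ioo (0:ℝ) (max (1 - 2^n * (1/x)) 0), s ^ x * ω s := by
      intro n
      induction n with
      | zero =>
        have hmax : max (1 - 2^0 * (1/x)) 0 = 1 - 1/x := by
          rw [pow_zero, one_mul]; exact max_eq_left (by linarith)
        rw [hmax, Finset.range_zero, Finset.sum_empty, add_zero, one_mul]
        rw [stmt3_split hgint le_rfl (by linarith : (0:ℝ) ≤ 1 - 1/x)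
          (by linarith : 1 - 1/x ≤ 1) le_rfl]
        have hle : (∫ s in Set.Ioo (1 - 1/x) 1, s ^ x * ω s) ≤ W := by
          rw [hWdef]
          apply setIntegral_mono_on
            (hgint.mono_set (Set.Ioo_subset_Ioo (by linarith) le_rfl))
            (hω_int.mono_set (Set.Ioo_subset_Ioo (by linarith) le_rfl)) measurableSet_Ioo
          intro s hs
          have hs0 : (0:ℝ) ≤ s := le_trans (by linarith) hs.1.le
          have h1 := Real.rpow_le_one hs0 hs.2.le hx0.le
          have h2 := hω_nonneg s ⟨hs0, hs.2⟩
          nlinarith [Real.rpow_nonneg hs0 x]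
        linarith
      | succ n ih =>
        set b : ℝ := max (1 - 2^n * (1/x)) 0 with hbdef
        set a : ℝ := max (1 - 2^(n+1) * (1/x)) 0 with hadef
        have hterm : (0:ℝ) ≤ C'^(n+1) * Real.exp (-2^n) := by positivity
        have hpow : (0:ℝ) < 2^n * (1/x) := by positivity
        have hpow2 : (2:ℝ)^n * (1/x) ≤ 2^(n+1) * (1/x) := by
          apply mul_le_mul_of_nonneg_right _ hix0.le
          exact pow_le_pow_right₀ (by norm_num) (Nat.le_succ n)
        have hb1 : b ≤ 1 := max_le (by linarith) (by norm_num)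
        have ha0 : (0:ℝ) ≤ a := le_max_right _ _
        have hab : a ≤ b := max_le_max (by linarith) le_rfl
        rcases le_or_gt (1 - 2^n * (1/x)) 0 with hb0 | hb0
        · -- both maxima are 0
          have hbz : b = 0 := max_eq_right hb0
          have haz : a = 0 := max_eq_right (by linarith)
          rw [haz]; rw [hbz] at ih
          rw [Finset.sum_range_succ]
          have : (1 + ∑ k ∈ Finset.range n, C'^(k+1) * Real.exp (-2^k)) * W
              ≤ (1 + (∑ k ∈ Finset.range n, C'^(k+1) * Real.exp (-2^k)
                  + C'^(n+1) * Real.exp (-2^n))) * W :=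
            mul_le_mul_of_nonneg_right (by linarith) hW0
          linarith
        · -- b = 1 - 2^n/x > 0
          have hbz : b = 1 - 2^n * (1/x) := max_eq_left hb0.le
          have hsplit := stmt3_split hgint (le_refl (0:ℝ)) ha0 hab hb1
          have hIab : (∫ s in Set.Ioo a b, s ^ x * ω s)
              ≤ Real.exp (-2^n) * ∫ s in Set.Ioo a 1, ω s := by
            have step1 : (∫ s in Set.Ioo a b, s ^ x * ω s)
                ≤ ∫ s in Set.Ioo a b, Real.exp (-2^n) * ω s := by
              apply setIntegral_mono_on
                (hgint.mono_set (Set.Ioo_subset_Ioo ha0 hb1))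
                ((hω_int.mono_set (Set.Ioo_subset_Ioo ha0 hb1)).const_mul _)
                measurableSet_Ioo
              intro s hs
              have hs0 : 0 < s := lt_of_le_of_lt ha0 hs.1
              have hωs : 0 ≤ ω s := hω_nonneg s ⟨hs0.le, lt_of_lt_of_le hs.2 hb1⟩
              refine mul_le_mul_of_nonneg_right ?_ hωs
              have h1 : s ^ x ≤ b ^ x := Real.rpow_le_rpow hs0.le hs.2.le hx0.le
              have hb0' : 0 < b := by rw [hbz]; exact hb0
              have h2 : b ^ x ≤ Real.exp (-2^n) := by
                rw [Real.rpow_def_of_pos hb0']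
                apply Real.exp_le_exp.2
                have hlb : Real.log b ≤ b - 1 := Real.log_le_sub_one_of_pos hb0'
                have h3 : Real.log b * x ≤ (b - 1) * x :=
                  mul_le_mul_of_nonneg_right hlb hx0.le
                have he : (b - 1) * x = -2^n := by
                  rw [hbz]; field_simp; ring
                linarith
              linarith
            have step2 : (∫ s in Set.Ioo a b, Real.exp (-2^n) * ω s)
                = Real.exp (-2^n) * ∫ s in Set.Ioo a b, ω s := integral_const_mul _ _
            have step3 : (∫ s in Set.Ioo a b, ω s) ≤ ∫ s in Set.Ioo a 1, ω s := by
              apply setIntegral_mono_set (hω_int.mono_set (Set.Ioo_subset_Ioo ha0 le_rfl))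
              · filter_upwards [ae_restrict_mem measurableSet_Ioo] with s hs
                exact hω_nonneg s ⟨le_trans ha0 hs.1.le, hs.2⟩
              · exact HasSubset.Subset.eventuallyLE (Set.Ioo_subset_Ioo le_rfl hb1)
            calc (∫ s in Set.Ioo a b, s ^ x * ω s)
                ≤ ∫ s in Set.Ioo a b, Real.exp (-2^n) * ω s := step1
              _ = Real.exp (-2^n) * ∫ s in Set.Ioo a b, ω s := step2
              _ ≤ Real.exp (-2^n) * ∫ s in Set.Ioo a 1, ω s :=
                  mul_le_mul_of_nonneg_left step3 (Real.exp_nonneg _)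
          have hiter : (∫ s in Set.Ioo a 1, ω s) ≤ C'^(n+1) * W := by
            rw [hWdef]
            have := stmt3_iter hω_nonneg hω_int hdoubling (n+1) hix0 hix1
            rw [hadef]
            convert this using 4
          calc (∫ s in Set.Ioo (0:ℝ) 1, s ^ x * ω s)
              ≤ (1 + ∑ k ∈ Finset.range n, C'^(k+1) * Real.exp (-2^k)) * W
                + ∫ s in Set.Ioo (0:ℝ) b, s ^ x * ω s := ih
            _ = (1 + ∑ k ∈ Finset.range n, C'^(k+1) * Real.exp (-2^k)) * W
                + ((∫ s in Set.Ioo (0:ℝ) a, s ^ x * ω s)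
                  + ∫ s in Set.Ioo a b, s ^ x * ω s) := by rw [← hsplit]
            _ ≤ (1 + ∑ k ∈ Finset.range n, C'^(k+1) * Real.exp (-2^k)) * W
                + ((∫ s in Set.Ioo (0:ℝ) a, s ^ x * ω s)
                  + Real.exp (-2^n) * (C'^(n+1) * W)) := by
                have := hIab.trans (mul_le_mul_of_nonneg_left hiter (Real.exp_nonneg _))
                linarith
            _ = (1 + ∑ k ∈ Finset.range (n+1), C'^(k+1) * Real.exp (-2^k)) * W
                + ∫ s in Set.Ioo (0:ℝ) a, s ^ x * ω s := by
                rw [Finset.sum_range_succ]; ring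
    obtain ⟨N, hN⟩ := pow_unbounded_of_one_lt x (by norm_num : (1:ℝ) < 2)
    have hmaxN : max (1 - 2^N * (1/x)) 0 = 0 := by
      apply max_eq_right
      have h1 : (1:ℝ) ≤ 2^N * (1/x) := by
        rw [mul_one_div, le_div_iff₀ hx0]; linarith
      linarith
    have hkeyN := key N
    rw [hmaxN, Set.Ioo_self, Measure.restrict_empty, integral_zero_measure] at hkeyN
    have hsumle : (∑ k ∈ Finset.range N, C'^(k+1) * Real.exp (-2^k)) ≤ K :=
      Summable.sum_le_tsum _ (fun k _ => by positivity) hsum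
    calc (∫ s in Set.Ioo (0:ℝ) 1, s ^ x * ω s)
        ≤ (1 + ∑ k ∈ Finset.range N, C'^(k+1) * Real.exp (-2^k)) * W + 0 := hkeyN
      _ ≤ (1 + K) * W := by
          rw [add_zero]
          exact mul_le_mul_of_nonneg_right (by linarith) hW0
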